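/- Let r > 0 and m ≥ 1. The function P : (0,∞)^m → ℝ defined by P(y_1,…,y_m) = (∑_{k=1}^{m} y_k^{−1/r})^{−r} is concave on the positive orthant and nondecreasing in each coordinate. -/

import Mathlib

open Real Set Finset

lemma convexOn_rpow_neg' {s : ℝ} (hs : 0 < s) :
    ConvexOn ℝ (Set.Ioi (0:ℝ)) fun x : ℝ => x ^ (-s) := by
  have hlog : ConvexOn ℝ (Set.Ioi (0:ℝ)) fun x => -s * Real.log x := by
    have h1 : ConvexOn ℝ (Set.Ioi (0:ℝ)) fun x => -Real.log x :=
      strictConcaveOn_log_Ioi.concaveOn.neg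
    have h2 := h1.smul hs.le
    simp only [smul_eq_mul, mul_neg] at h2
    simpa [neg_mul] using h2
  refine ⟨convex_Ioi 0, ?_⟩
  intro x hx y hy a b ha hb hab
  simp only [smul_eq_mul]
  have hx' : (0:ℝ) < x := hx
  have hy' : (0:ℝ) < y := hy
  have hxy : 0 < a * x + b * y := by
    rcases eq_or_lt_of_le ha with h | h
    · have hb1 : b = 1 := by linarith
      rw [← h, hb1]; simpa using hy'
    · exact add_pos_of_pos_of_nonneg (mul_pos h hx') (mul_nonneg hb hy'.le)
  rw [rpow_def_of_pos hxy, rpow_def_of_pos hx', rpow_def_of_pos hy']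
  calc Real.exp (Real.log (a * x + b * y) * (-s))
      ≤ Real.exp (a * (Real.log x * (-s)) + b * (Real.log y * (-s))) := by
        apply Real.exp_le_exp.2
        have := hlog.2 hx hy ha hb hab
        simp only [smul_eq_mul] at this
        nlinarith [this]
    _ ≤ a * Real.exp (Real.log x * (-s)) + b * Real.exp (Real.log y * (-s)) := by
        have := convexOn_exp.2 (Set.mem_univ (Real.log x * (-s)))
          (Set.mem_univ (Real.log y * (-s))) ha hb hab
        simpa [smul_eq_mul] using this

lemma rpow_neg_add_le' {s θ u v : ℝ} (hs : 0 < s) (hθ : 0 < θ) (hθ1 : θ < 1)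
    (hu : 0 < u) (hv : 0 < v) :
    (u + v) ^ (-s) ≤ θ ^ (1 + s) * u ^ (-s) + (1 - θ) ^ (1 + s) * v ^ (-s) := by
  have hθ1' : (0:ℝ) < 1 - θ := by linarith
  have h := (convexOn_rpow_neg' hs).2 (Set.mem_Ioi.2 (div_pos hu hθ))
    (Set.mem_Ioi.2 (div_pos hv hθ1')) hθ.le hθ1'.le (by ring)
  simp only [smul_eq_mul] at h
  have e1 : θ * (u / θ) + (1 - θ) * (v / (1 - θ)) = u + v := by
    field_simp
  have e2 : (u / θ) ^ (-s) = θ ^ s * u ^ (-s) := by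
    rw [Real.div_rpow hu.le hθ.le, Real.rpow_neg hθ.le]
    field_simp [mul_comm]
  have e3 : (v / (1 - θ)) ^ (-s) = (1 - θ) ^ s * v ^ (-s) := by
    rw [Real.div_rpow hv.le hθ1'.le, Real.rpow_neg hθ1'.le]
    field_simp [mul_comm]
  have e4 : θ ^ (1 + s) = θ * θ ^ s := by
    rw [Real.rpow_add hθ, Real.rpow_one]
  have e5 : (1 - θ) ^ (1 + s) = (1 - θ) * (1 - θ) ^ s := by
    rw [Real.rpow_add hθ1', Real.rpow_one]
  rw [e1, e2, e3] at h
  rw [e4, e5]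
  linarith [h]

/-- The `p`-parallel-sum map `P(y_1,…,y_m) = (∑_k y_k^{-1/r})^{-r}` is concave on the
positive orthant and nondecreasing in each coordinate. -/
theorem stmt9 (r : ℝ) (hr : 0 < r) (m : ℕ) (hm : 1 ≤ m) :
    ConcaveOn ℝ {y : Fin m → ℝ | ∀ k, 0 < y k}
      (fun y : Fin m → ℝ => (∑ k, (y k) ^ (-(1 / r))) ^ (-r)) ∧
    ∀ y z : Fin m → ℝ, (∀ k, 0 < y k) → (∀ k, 0 < z k) → (∀ k, y k ≤ z k) →
      (∑ k, (y k) ^ (-(1 / r))) ^ (-r) ≤ (∑ k, (z k) ^ (-(1 / r))) ^ (-r) := by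
  have hs : (0:ℝ) < 1 / r := by positivity
  haveI : Nonempty (Fin m) := ⟨⟨0, hm⟩⟩
  have hne : (Finset.univ : Finset (Fin m)).Nonempty := Finset.univ_nonempty
  have sumpos : ∀ y : Fin m → ℝ, (∀ k, 0 < y k) → 0 < ∑ k, (y k) ^ (-(1 / r)) := by
    intro y hy
    exact Finset.sum_pos (fun k _ => Real.rpow_pos_of_pos (hy k) _) hne
  constructor
  · constructor
    · -- convexity of the positive orthant
      intro y hy z hz a b ha hb hab k
      simp only [Pi.add_apply, Pi.smul_apply, smul_eq_mul]
      rcases eq_or_lt_of_le ha with h | h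
      · have hb1 : b = 1 := by linarith
        rw [← h, hb1]; simpa using hz k
      · exact add_pos_of_pos_of_nonneg (mul_pos h (hy k)) (mul_nonneg hb (hz k).le)
    · intro y hy z hz a b ha hb hab
      simp only [Set.mem_setOf_eq] at hy hz
      simp only [smul_eq_mul, Pi.add_apply, Pi.smul_apply]
      rcases eq_or_lt_of_le ha with haz | hap
      · have hb1 : b = 1 := by linarith
        rw [← haz, hb1]
        simp
      rcases eq_or_lt_of_le hb with hbz | hbp
      · have ha1 : a = 1 := by linarith
        rw [← hbz, ha1]
        simp
      -- main case: 0 < a, 0 < b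
      set Sy := ∑ k, (y k) ^ (-(1 / r)) with hSydef
      set Sz := ∑ k, (z k) ^ (-(1 / r)) with hSzdef
      have hSy : 0 < Sy := sumpos y hy
      have hSz : 0 < Sz := sumpos z hz
      set A := a * Sy ^ (-r) with hAdef
      set B := b * Sz ^ (-r) with hBdef
      have hA : 0 < A := mul_pos hap (Real.rpow_pos_of_pos hSy _)
      have hB : 0 < B := mul_pos hbp (Real.rpow_pos_of_pos hSz _)
      have hAB : 0 < A + B := by linarith
      set θ := A / (A + B) with hθdef
      have hθ : 0 < θ := div_pos hA hAB
      have hθ1 : θ < 1 := (div_lt_one hAB).2 (by linarith)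
      have h1θ : 1 - θ = B / (A + B) := by
        rw [hθdef, eq_div_iff hAB.ne', sub_mul, div_mul_cancel₀ _ hAB.ne']; ring
      -- per-coordinate bound
      have key : ∀ k, (a * y k + b * z k) ^ (-(1 / r)) ≤
          θ ^ (1 + 1 / r) * (a * y k) ^ (-(1 / r)) +
          (1 - θ) ^ (1 + 1 / r) * (b * z k) ^ (-(1 / r)) := fun k =>
        rpow_neg_add_le' hs hθ hθ1 (mul_pos hap (hy k)) (mul_pos hbp (hz k))
      have ey : ∑ k, (a * y k) ^ (-(1 / r)) = a ^ (-(1 / r)) * Sy := by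
        rw [hSydef, Finset.mul_sum]
        exact Finset.sum_congr rfl fun k _ => Real.mul_rpow hap.le (hy k).le
      have ez : ∑ k, (b * z k) ^ (-(1 / r)) = b ^ (-(1 / r)) * Sz := by
        rw [hSzdef, Finset.mul_sum]
        exact Finset.sum_congr rfl fun k _ => Real.mul_rpow hbp.le (hz k).le
      have hAe : A ^ (-(1 / r)) = a ^ (-(1 / r)) * Sy := by
        rw [hAdef, Real.mul_rpow hap.le (Real.rpow_pos_of_pos hSy _).le]
        congr 1
        rw [← Real.rpow_mul hSy.le]
        have : (-r) * (-(1 / r)) = 1 := by field_simp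
        rw [this, Real.rpow_one]
      have hBe : B ^ (-(1 / r)) = b ^ (-(1 / r)) * Sz := by
        rw [hBdef, Real.mul_rpow hbp.le (Real.rpow_pos_of_pos hSz _).le]
        congr 1
        rw [← Real.rpow_mul hSz.le]
        have : (-r) * (-(1 / r)) = 1 := by field_simp
        rw [this, Real.rpow_one]
      have hsum : ∑ k, (a * y k + b * z k) ^ (-(1 / r)) ≤ (A + B) ^ (-(1 / r)) := by
        have step1 : ∑ k, (a * y k + b * z k) ^ (-(1 / r)) ≤
            θ ^ (1 + 1 / r) * (A ^ (-(1 / r))) + (1 - θ) ^ (1 + 1 / r) * (B ^ (-(1 / r))) := by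
          calc ∑ k, (a * y k + b * z k) ^ (-(1 / r))
              ≤ ∑ k, (θ ^ (1 + 1 / r) * (a * y k) ^ (-(1 / r)) +
                  (1 - θ) ^ (1 + 1 / r) * (b * z k) ^ (-(1 / r))) :=
                Finset.sum_le_sum fun k _ => key k
            _ = θ ^ (1 + 1 / r) * (A ^ (-(1 / r))) +
                (1 - θ) ^ (1 + 1 / r) * (B ^ (-(1 / r))) := by
                rw [Finset.sum_add_distrib, ← Finset.mul_sum, ← Finset.mul_sum, ey, ez,
                  hAe, hBe]
        have stepθ : θ ^ (1 + 1 / r) * (A ^ (-(1 / r))) = A / (A + B) ^ (1 + 1 / r) := by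
          rw [hθdef, Real.div_rpow hA.le hAB.le, div_mul_eq_mul_div,
            ← Real.rpow_add hA]
          have : 1 + 1 / r + -(1 / r) = 1 := by ring
          rw [this, Real.rpow_one]
        have step1θ : (1 - θ) ^ (1 + 1 / r) * (B ^ (-(1 / r))) = B / (A + B) ^ (1 + 1 / r) := by
          rw [h1θ, Real.div_rpow hB.le hAB.le, div_mul_eq_mul_div,
            ← Real.rpow_add hB]
          have : 1 + 1 / r + -(1 / r) = 1 := by ring
          rw [this, Real.rpow_one]
        have stepfin : (A + B) ^ (-(1 / r)) = A / (A + B) ^ (1 + 1 / r) + B / (A + B) ^ (1 + 1 / r) := by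
          rw [← add_div, eq_div_iff (Real.rpow_pos_of_pos hAB _).ne',
            ← Real.rpow_add hAB]
          have : -(1 / r) + (1 + 1 / r) = 1 := by ring
          rw [this, Real.rpow_one]
        rw [stepfin]
        calc ∑ k, (a * y k + b * z k) ^ (-(1 / r))
            ≤ θ ^ (1 + 1 / r) * (A ^ (-(1 / r))) + (1 - θ) ^ (1 + 1 / r) * (B ^ (-(1 / r))) := step1
          _ = A / (A + B) ^ (1 + 1 / r) + B / (A + B) ^ (1 + 1 / r) := by rw [stepθ, step1θ]
      have hposw : 0 < ∑ k, (a * y k + b * z k) ^ (-(1 / r)) :=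
        Finset.sum_pos (fun k _ => Real.rpow_pos_of_pos
          (add_pos (mul_pos hap (hy k)) (mul_pos hbp (hz k))) _) hne
      have h2 := Real.rpow_le_rpow_of_nonpos hposw hsum (neg_nonpos.2 hr.le)
      have h3 : ((A + B) ^ (-(1 / r))) ^ (-r) = A + B := by
        rw [← Real.rpow_mul hAB.le]
        have : -(1 / r) * (-r) = 1 := by field_simp
        rw [this, Real.rpow_one]
      rw [h3] at h2
      exact h2
  · intro y z hy hz hle
    have h1 : ∑ k, (z k) ^ (-(1 / r)) ≤ ∑ k, (y k) ^ (-(1 / r)) :=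
      Finset.sum_le_sum fun k _ =>
        Real.rpow_le_rpow_of_nonpos (hy k) (hle k) (neg_nonpos.2 hs.le)
    exact Real.rpow_le_rpow_of_nonpos (sumpos z hz) h1 (neg_nonpos.2 hr.le)
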